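/- For all integers L ≥ 3, s ≥ 1, r ≥ 0 and k₁ > k₂ ≥ 1, the formal power series H*(q) = (q^r(1 − q^{k₁}) − (1 − q^{k₂})) / (q^s;q)_{L+1} in ℤ[[q]] is eventually positive; that is, there exists an integer M ≥ 0 such that the coefficient of q^n in H*(q) is positive for all n > M. -/

import Mathlib

open PowerSeries Finset

namespace BU

noncomputable def S (a : ℕ) : PowerSeries ℤ := PowerSeries.mk fun n => if a ∣ n then 1 else 0

lemma coeff_S (a n : ℕ) : coeff n (S a) = if a ∣ n then 1 else 0 := coeff_mk _ _

lemma S_nonneg (a n : ℕ) : 0 ≤ coeff n (S a) := by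
  rw [coeff_S]; split <;> norm_num

lemma S_le_one (a n : ℕ) : coeff n (S a) ≤ 1 := by
  rw [coeff_S]; split <;> norm_num

lemma one_sub_mul_S (a : ℕ) (ha : 1 ≤ a) : (1 - X ^ a) * S a = 1 := by
  ext n
  rw [sub_mul, one_mul, map_sub, coeff_X_pow_mul', coeff_one, coeff_S]
  by_cases h : a ≤ n
  · rw [if_pos h, coeff_S]
    have hn0 : ¬ (n = 0) := by omega
    rw [if_neg hn0]
    have hiff : a ∣ n ↔ a ∣ n - a := by
      constructor
      · intro hd; exact (Nat.dvd_sub hd dvd_rfl)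
      · intro hd; have := Nat.dvd_add hd (dvd_refl a); rwa [Nat.sub_add_cancel h] at this
    by_cases hd : a ∣ n
    · rw [if_pos hd, if_pos (hiff.mp hd)]; ring
    · rw [if_neg hd, if_neg (fun hc => hd (hiff.mpr hc))]; ring
  · rw [if_neg h]
    rcases Nat.eq_zero_or_pos n with h0 | h0
    · subst h0; rw [if_pos (dvd_zero a), if_pos rfl]; ring
    · rw [if_neg (fun hd : a ∣ n => h (Nat.le_of_dvd h0 hd)), if_neg (by omega)]; ring

/-- coefficient formula for `S a * F`. -/
lemma coeff_S_mul (a : ℕ) (ha : 1 ≤ a) (F : PowerSeries ℤ) (n : ℕ) :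
    coeff n (S a * F) = ∑ t ∈ range (n / a + 1), coeff (n - a * t) F := by
  rw [coeff_mul, Finset.Nat.sum_antidiagonal_eq_sum_range_succ_mk]
  have himg : (range (n + 1)).filter (fun i => a ∣ i) = (range (n / a + 1)).image (fun t => a * t) := by
    ext i
    simp only [mem_filter, mem_range, mem_image]
    constructor
    · rintro ⟨hi, t, rfl⟩
      refine ⟨t, ?_, rfl⟩
      rw [Nat.lt_succ_iff] at hi ⊢
      rw [Nat.le_div_iff_mul_le (by omega : 0 < a), mul_comm t a]
      omega
    · rintro ⟨t, ht, rfl⟩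
      rw [Nat.lt_succ_iff] at ht
      rw [Nat.le_div_iff_mul_le (by omega : 0 < a), mul_comm t a] at ht
      exact ⟨by omega, ⟨t, rfl⟩⟩
  have heq : ∑ k ∈ range (n + 1), coeff k (S a) * coeff (n - k) F
      = ∑ k ∈ (range (n + 1)).filter (fun i => a ∣ i), coeff (n - k) F := by
    rw [Finset.sum_filter]
    apply Finset.sum_congr rfl
    intro k _
    rw [coeff_S]
    split <;> simp
  rw [heq, himg, Finset.sum_image (by intro x _ y _ h; exact Nat.eq_of_mul_eq_mul_left (by omega) h)]

lemma coeff_one_mul_S (F : PowerSeries ℤ) (n : ℕ) :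
    coeff n (S 1 * F) = ∑ j ∈ range (n + 1), coeff j F := by
  rw [coeff_S_mul 1 le_rfl]
  simp only [Nat.div_one, one_mul]
  rw [← Finset.sum_range_reflect (fun j => coeff j F) (n+1)]
  apply Finset.sum_congr rfl
  intro j hj
  rw [mem_range, Nat.lt_succ_iff] at hj
  have : n + 1 - 1 - j = n - j := by omega
  rw [this]


noncomputable def prodS (ms : Multiset ℕ) : PowerSeries ℤ := (ms.map S).prod

lemma prodS_zero : prodS 0 = 1 := by simp [prodS]

lemma prodS_cons (a : ℕ) (ms : Multiset ℕ) : prodS (a ::ₘ ms) = S a * prodS ms := by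
  simp [prodS]

lemma coeff_mul_nonneg (F G : PowerSeries ℤ) (hF : ∀ i, 0 ≤ coeff i F)
    (hG : ∀ j, 0 ≤ coeff j G) (n : ℕ) : 0 ≤ coeff n (F * G) := by
  rw [coeff_mul]
  exact Finset.sum_nonneg fun p _ => mul_nonneg (hF _) (hG _)

lemma prodS_nonneg (ms : Multiset ℕ) : ∀ n, 0 ≤ coeff n (prodS ms) := by
  induction ms using Multiset.induction_on with
  | empty => intro n; rw [prodS_zero, coeff_one]; split <;> norm_num
  | cons a ms ih =>
    intro n
    rw [prodS_cons]
    exact coeff_mul_nonneg _ _ (S_nonneg a) ih n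

lemma prodS_ub (ms : Multiset ℕ) :
    ∀ n, coeff n (prodS ms) ≤ ((n : ℤ) + 1) ^ (Multiset.card ms - 1) := by
  induction ms using Multiset.induction_on with
  | empty =>
    intro n
    rw [prodS_zero, coeff_one]
    simp only [Multiset.card_zero, Nat.zero_sub, pow_zero]
    split <;> norm_num
  | cons a ms ih =>
    intro n
    rw [prodS_cons]
    rcases Multiset.empty_or_exists_mem ms with rfl | _
    · rw [prodS_zero, mul_one]
      simpa using S_le_one a n
    · have hc : 1 ≤ Multiset.card ms := by
        rcases ‹∃ x, x ∈ ms› with ⟨x, hx⟩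
        exact Multiset.card_pos.mpr (fun h => by simp [h] at hx)
      rw [coeff_mul]
      have hb : ∀ p ∈ Finset.HasAntidiagonal.antidiagonal n,
          coeff p.1 (S a) * coeff p.2 (prodS ms) ≤ ((n : ℤ) + 1) ^ (Multiset.card ms - 1) := by
        intro p hp
        have h2 := mem_antidiagonal.mp hp
        calc coeff p.1 (S a) * coeff p.2 (prodS ms)
            ≤ 1 * coeff p.2 (prodS ms) :=
              mul_le_mul_of_nonneg_right (S_le_one a p.1) (prodS_nonneg ms p.2)
          _ = coeff p.2 (prodS ms) := one_mul _
          _ ≤ ((p.2 : ℤ) + 1) ^ (Multiset.card ms - 1) := ih p.2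
          _ ≤ ((n : ℤ) + 1) ^ (Multiset.card ms - 1) := by
              apply pow_le_pow_left₀ (by positivity)
              have : p.2 ≤ n := by omega
              exact_mod_cast by omega
      calc (∑ p ∈ Finset.HasAntidiagonal.antidiagonal n, coeff p.1 (S a) * coeff p.2 (prodS ms))
          ≤ ∑ _p ∈ Finset.HasAntidiagonal.antidiagonal n, ((n : ℤ) + 1) ^ (Multiset.card ms - 1) :=
            Finset.sum_le_sum hb
        _ = (Finset.HasAntidiagonal.antidiagonal n).card • ((n : ℤ) + 1) ^ (Multiset.card ms - 1) :=
            Finset.sum_const _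
        _ = ((n + 1 : ℕ) : ℤ) * ((n : ℤ) + 1) ^ (Multiset.card ms - 1) := by
            rw [Finset.Nat.card_antidiagonal, nsmul_eq_mul]
        _ ≤ ((n : ℤ) + 1) ^ (Multiset.card (a ::ₘ ms) - 1) := by
            rw [Multiset.card_cons]
            have h3 : Multiset.card ms + 1 - 1 = (Multiset.card ms - 1) + 1 := by omega
            rw [h3, pow_succ]
            push_cast
            rw [mul_comm]

lemma lower_step (a c d B : ℕ) (ha : 1 ≤ a) (hB : 1 ≤ B) (F : PowerSeries ℤ)
    (hF0 : ∀ m, 0 ≤ coeff m F)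
    (hFl : ∀ m : ℕ, (((m - c) ^ d : ℕ) : ℤ) ≤ (B : ℤ) * coeff m F) :
    ∀ n : ℕ, (((n - (c + 1)) ^ (d + 1) : ℕ) : ℤ)
      ≤ ((2 * a * 2 ^ d * B : ℕ) : ℤ) * coeff n (S a * F) := by
  intro n
  set Mn := n - c with hMn
  set K := Mn / (2 * a) with hK
  -- key ℕ facts
  have h2a : 0 < 2 * a := by omega
  have hKa : a * K ≤ Mn / 2 := by
    rw [Nat.le_div_iff_mul_le (by norm_num : 0 < 2)]
    have := Nat.div_mul_le_self Mn (2 * a)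
    calc a * K * 2 = Mn / (2 * a) * (2 * a) := by rw [hK]; ring
      _ ≤ Mn := Nat.div_mul_le_self _ _
  have hKn : K ≤ n / a := by
    calc K = Mn / (2 * a) := rfl
      _ ≤ n / (2 * a) := Nat.div_le_div_right (by omega)
      _ ≤ n / a := Nat.div_le_div_left (by omega) (by omega)
  -- sum lower bound
  have hsub : range (K + 1) ⊆ range (n / a + 1) := by
    apply Finset.range_subset_range.mpr; omega
  have hcoeff : coeff n (S a * F) = ∑ t ∈ range (n / a + 1), coeff (n - a * t) F :=
    coeff_S_mul a ha F n
  have hsum1 : (∑ t ∈ range (K + 1), coeff (n - a * t) F) ≤ coeff n (S a * F) := by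
    rw [hcoeff]
    exact Finset.sum_le_sum_of_subset_of_nonneg hsub (fun i _ _ => hF0 _)
  have hterm : ∀ t ∈ range (K + 1),
      (((Mn / 2) ^ d : ℕ) : ℤ) ≤ (B : ℤ) * coeff (n - a * t) F := by
    intro t ht
    rw [mem_range, Nat.lt_succ_iff] at ht
    have hat : a * t ≤ Mn / 2 := le_trans (Nat.mul_le_mul_left a ht) hKa
    have hd2 : 2 * (Mn / 2) ≤ Mn := by omega
    have h1 : Mn / 2 ≤ n - a * t - c := by omega
    calc (((Mn / 2) ^ d : ℕ) : ℤ) ≤ (((n - a * t - c) ^ d : ℕ) : ℤ) := by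
          exact_mod_cast Nat.pow_le_pow_left h1 d
      _ ≤ (B : ℤ) * coeff (n - a * t) F := hFl _
  have hsum2 : ((K + 1 : ℕ) : ℤ) * (((Mn / 2) ^ d : ℕ) : ℤ)
      ≤ (B : ℤ) * coeff n (S a * F) := by
    calc ((K + 1 : ℕ) : ℤ) * (((Mn / 2) ^ d : ℕ) : ℤ)
        = ∑ _t ∈ range (K + 1), (((Mn / 2) ^ d : ℕ) : ℤ) := by
          rw [Finset.sum_const, Finset.card_range, nsmul_eq_mul]; try push_cast; try ring
      _ ≤ ∑ t ∈ range (K + 1), (B : ℤ) * coeff (n - a * t) F := Finset.sum_le_sum hterm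
      _ = (B : ℤ) * ∑ t ∈ range (K + 1), coeff (n - a * t) F := by
          rw [Finset.mul_sum]
      _ ≤ (B : ℤ) * coeff n (S a * F) := by
          apply mul_le_mul_of_nonneg_left hsum1 (by positivity)
  -- ℕ side comparison
  have hKM : Mn + 1 ≤ 2 * a * (K + 1) := by
    have hmod := Nat.div_add_mod Mn (2 * a)
    rw [← hK] at hmod
    have hlt : Mn % (2 * a) < 2 * a := Nat.mod_lt _ h2a
    have hexp : 2 * a * (K + 1) = 2 * a * K + 2 * a := by ring
    omega
  have hnat : (n - (c + 1)) ^ (d + 1) ≤ (2 * a * (K + 1)) * (2 ^ d * (Mn / 2) ^ d) := by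
    have e1 : 2 ^ d * (Mn / 2) ^ d = (2 * (Mn / 2)) ^ d := by rw [mul_pow]
    have e2 : Mn - 1 ≤ 2 * (Mn / 2) := by omega
    have e3 : (Mn - 1) ^ d ≤ (2 * (Mn / 2)) ^ d := Nat.pow_le_pow_left e2 d
    have e4 : n - (c + 1) = Mn - 1 := by omega
    calc (n - (c + 1)) ^ (d + 1) = (Mn - 1) ^ d * (Mn - 1) := by rw [e4, pow_succ]
      _ ≤ (2 * (Mn / 2)) ^ d * (Mn + 1) := by
          apply Nat.mul_le_mul e3 (by omega)
      _ ≤ (2 * (Mn / 2)) ^ d * (2 * a * (K + 1)) := Nat.mul_le_mul_left _ hKM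
      _ = (2 * a * (K + 1)) * (2 ^ d * (Mn / 2) ^ d) := by rw [e1]; ring
  -- combine
  have hfin : (((n - (c + 1)) ^ (d + 1) : ℕ) : ℤ)
      ≤ ((2 * a : ℕ) : ℤ) * (2 ^ d : ℤ) * (((K + 1 : ℕ) : ℤ) * (((Mn / 2) ^ d : ℕ) : ℤ)) := by
    have := hnat
    have hcast : (((2 * a * (K + 1)) * (2 ^ d * (Mn / 2) ^ d) : ℕ) : ℤ)
        = ((2 * a : ℕ) : ℤ) * (2 ^ d : ℤ) * (((K + 1 : ℕ) : ℤ) * (((Mn / 2) ^ d : ℕ) : ℤ)) := by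
      push_cast; ring
    calc (((n - (c + 1)) ^ (d + 1) : ℕ) : ℤ)
        ≤ (((2 * a * (K + 1)) * (2 ^ d * (Mn / 2) ^ d) : ℕ) : ℤ) := by exact_mod_cast hnat
      _ = _ := hcast
  calc (((n - (c + 1)) ^ (d + 1) : ℕ) : ℤ)
      ≤ ((2 * a : ℕ) : ℤ) * (2 ^ d : ℤ) * (((K + 1 : ℕ) : ℤ) * (((Mn / 2) ^ d : ℕ) : ℤ)) := hfin
    _ ≤ ((2 * a : ℕ) : ℤ) * (2 ^ d : ℤ) * ((B : ℤ) * coeff n (S a * F)) := by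
        apply mul_le_mul_of_nonneg_left hsum2 (by positivity)
    _ = ((2 * a * 2 ^ d * B : ℕ) : ℤ) * coeff n (S a * F) := by push_cast; ring

lemma lower_chain (ms : Multiset ℕ) (h1 : ∀ x ∈ ms, 1 ≤ x) :
    ∃ B c : ℕ, 1 ≤ B ∧ ∀ n : ℕ,
      (((n - c) ^ (Multiset.card ms) : ℕ) : ℤ) ≤ (B : ℤ) * coeff n (prodS (1 ::ₘ ms)) := by
  induction ms using Multiset.induction_on with
  | empty =>
    refine ⟨1, 0, le_rfl, fun n => ?_⟩
    rw [prodS_cons, prodS_zero, mul_one, coeff_S]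
    simp
  | cons a ms ih =>
    obtain ⟨B, c, hB, hlow⟩ := ih (fun x hx => h1 x (Multiset.mem_cons_of_mem hx))
    have ha : 1 ≤ a := h1 a (Multiset.mem_cons_self a ms)
    refine ⟨2 * a * 2 ^ (Multiset.card ms) * B, c + 1, by exact Nat.mul_pos (Nat.mul_pos (by omega) (pow_pos (by norm_num) _)) (by omega), fun n => ?_⟩
    have hswap : prodS (1 ::ₘ a ::ₘ ms) = S a * prodS (1 ::ₘ ms) := by
      rw [Multiset.cons_swap, prodS_cons]
    rw [hswap, Multiset.card_cons]
    exact lower_step a c (Multiset.card ms) B ha hB _ (prodS_nonneg _) hlow n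



lemma pair_nonneg (a : ℕ) : ∀ x, 0 ≤ coeff x (S a * S (a+1)) :=
  fun x => coeff_mul_nonneg _ _ (S_nonneg a) (S_nonneg (a+1)) x

lemma key_iff (a t x : ℕ) (hle : (a+1)*t ≤ x) :
    a ∣ x - (a+1)*t ↔ t % a = x % a := by
  rw [← Nat.modEq_iff_dvd' hle]
  have h1 : (a+1)*t ≡ 1*t [MOD a] := Nat.ModEq.mul_right t (Nat.add_mod_left a 1)
  rw [one_mul] at h1
  constructor
  · intro h; exact h1.symm.trans h
  · intro h; exact h1.trans h

lemma pair_coeff_eq (a x : ℕ) (ha : 1 ≤ a) :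
    coeff x (S a * S (a+1))
      = ∑ t ∈ range (x / (a+1) + 1), (if a ∣ x - (a+1)*t then (1:ℤ) else 0) := by
  rw [mul_comm, coeff_S_mul (a+1) (by omega)]
  apply Finset.sum_congr rfl
  intro t _
  rw [coeff_S]

lemma pair_lower (a : ℕ) (ha : 1 ≤ a) (x : ℕ) :
    (x : ℤ) - (((a+1)^2 : ℕ) : ℤ) ≤ ((a*(a+1) : ℕ) : ℤ) * coeff x (S a * S (a+1)) := by
  by_cases hx : x < a * (a+1)
  · have h1 : (x : ℤ) - (((a+1)^2 : ℕ) : ℤ) ≤ 0 := by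
      have hx2 : x ≤ (a+1)^2 := by nlinarith
      have hc := (Nat.cast_le (α := ℤ)).mpr hx2
      linarith
    exact le_trans h1 (mul_nonneg (by positivity) (pair_nonneg a x))
  · push_neg at hx
    set ρ := x % a with hρdef
    set Xq := x / (a+1) with hXdef
    set U := (Xq - ρ) / a with hUdef
    have hρa : ρ < a := Nat.mod_lt _ (by omega)
    have hρX : ρ ≤ Xq := by
      have : a ≤ Xq := by
        rw [hXdef, Nat.le_div_iff_mul_le (by omega : 0 < a + 1)]
        omega
      omega
    have haU : a * U ≤ Xq - ρ := by
      rw [hUdef, mul_comm]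
      exact Nat.div_mul_le_self _ _
    have hX1 : (a+1) * Xq ≤ x := by
      rw [hXdef, mul_comm]
      exact Nat.div_mul_le_self _ _
    -- the image set
    have himg : (range (U+1)).image (fun u => ρ + a*u) ⊆ range (Xq + 1) := by
      intro t ht
      rw [Finset.mem_image] at ht
      obtain ⟨u, hu, rfl⟩ := ht
      rw [mem_range, Nat.lt_succ_iff] at hu ⊢
      have : a * u ≤ a * U := Nat.mul_le_mul_left a hu
      omega
    have hind : ∀ t ∈ (range (U+1)).image (fun u => ρ + a*u),
        (if a ∣ x - (a+1)*t then (1:ℤ) else 0) = 1 := by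
      intro t ht
      rw [Finset.mem_image] at ht
      obtain ⟨u, _, rfl⟩ := ht
      rw [if_pos]
      have hle : (a+1)*(ρ + a*u) ≤ x := by
        have h2 : ρ + a*u ≤ Xq := by
          have hu2 : u ≤ U := by
            rw [Finset.mem_range, Nat.lt_succ_iff] at *
            omega
          have : a * u ≤ a * U := Nat.mul_le_mul_left a hu2
          omega
        calc (a+1)*(ρ + a*u) ≤ (a+1)*Xq := Nat.mul_le_mul_left _ h2
          _ ≤ x := hX1
      rw [key_iff a _ x hle]
      rw [Nat.add_mul_mod_self_left]
      exact Nat.mod_eq_of_lt hρa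
    have hinj : Function.Injective (fun u => ρ + a*u) := by
      intro u v h
      simp only at h
      have : a * u = a * v := by omega
      exact Nat.eq_of_mul_eq_mul_left (by omega) this
    have hcard : ((range (U+1)).image (fun u => ρ + a*u)).card = U + 1 := by
      rw [Finset.card_image_of_injective _ hinj, Finset.card_range]
    have hge : ((U:ℤ) + 1) ≤ coeff x (S a * S (a+1)) := by
      rw [pair_coeff_eq a x ha]
      calc ((U:ℤ) + 1) = ∑ t ∈ (range (U+1)).image (fun u => ρ + a*u),
            (if a ∣ x - (a+1)*t then (1:ℤ) else 0) := by
            rw [Finset.sum_congr rfl hind, Finset.sum_const, hcard, nsmul_eq_mul]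
            push_cast; ring
        _ ≤ ∑ t ∈ range (Xq + 1), (if a ∣ x - (a+1)*t then (1:ℤ) else 0) := by
            apply Finset.sum_le_sum_of_subset_of_nonneg himg
            intro i _ _
            split <;> norm_num
    -- arithmetic finish
    have haU' : (Xq : ℤ) - ρ - a + 1 ≤ (a:ℤ) * U := by
      have hmod := Nat.div_add_mod (Xq - ρ) a
      rw [← hUdef] at hmod
      have hr : (Xq - ρ) % a < a := Nat.mod_lt _ (by omega)
      have hc : ((Xq - ρ : ℕ) : ℤ) = (Xq : ℤ) - ρ := by omega
      have hmodZ : (a:ℤ) * (U:ℤ) + (((Xq - ρ) % a : ℕ) : ℤ) = (Xq:ℤ) - (ρ:ℤ) := by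
        rw [← hc]; exact_mod_cast hmod
      have hrZ : (((Xq - ρ) % a : ℕ) : ℤ) < (a:ℤ) := by exact_mod_cast hr
      linarith
    have hX1' : (x : ℤ) - a ≤ ((a:ℤ)+1) * Xq := by
      have hmod := Nat.div_add_mod x (a+1)
      rw [← hXdef] at hmod
      have hr : x % (a+1) < a + 1 := Nat.mod_lt _ (by omega)
      have hmodZ : ((a:ℤ)+1) * (Xq:ℤ) + ((x % (a+1) : ℕ):ℤ) = (x:ℤ) := by exact_mod_cast hmod
      have hrZ : ((x % (a+1) : ℕ):ℤ) < (a:ℤ)+1 := by exact_mod_cast hr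
      linarith
    have hρ' : (ρ : ℤ) ≤ (a:ℤ) - 1 := by exact_mod_cast by omega
    have hfinal : (x : ℤ) - (((a+1)^2 : ℕ) : ℤ) ≤ ((a*(a+1) : ℕ):ℤ) * ((U:ℤ) + 1) := by
      push_cast
      nlinarith [mul_le_mul_of_nonneg_left haU' (by positivity : (0:ℤ) ≤ (a:ℤ)+1),
        mul_le_mul_of_nonneg_left hρ' (by positivity : (0:ℤ) ≤ (a:ℤ)+1)]
    calc (x : ℤ) - (((a+1)^2 : ℕ) : ℤ) ≤ ((a*(a+1) : ℕ):ℤ) * ((U:ℤ) + 1) := hfinal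
      _ ≤ ((a*(a+1) : ℕ):ℤ) * coeff x (S a * S (a+1)) := by
          apply mul_le_mul_of_nonneg_left hge (by positivity)

lemma pair_upper (a : ℕ) (ha : 1 ≤ a) (x : ℕ) :
    ((a*(a+1) : ℕ) : ℤ) * coeff x (S a * S (a+1)) ≤ (x : ℤ) + ((a*(a+1) : ℕ) : ℤ) := by
  set ρ := x % a with hρdef
  set Xq := x / (a+1) with hXdef
  set U' := Xq / a with hU'def
  have hsub : (range (Xq+1)).filter (fun t => a ∣ x - (a+1)*t)
      ⊆ (range (U'+1)).image (fun u => ρ + a*u) := by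
    intro t ht
    rw [Finset.mem_filter, mem_range, Nat.lt_succ_iff] at ht
    obtain ⟨ht1, ht2⟩ := ht
    have hle : (a+1)*t ≤ x := by
      calc (a+1)*t ≤ (a+1)*Xq := Nat.mul_le_mul_left _ ht1
        _ ≤ x := by rw [hXdef, mul_comm]; exact Nat.div_mul_le_self _ _
    rw [key_iff a _ x hle] at ht2
    rw [Finset.mem_image]
    refine ⟨t / a, ?_, ?_⟩
    · rw [mem_range, Nat.lt_succ_iff]
      exact Nat.div_le_div_right ht1
    · have := Nat.div_add_mod t a
      rw [ht2] at this
      omega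
  have hle1 : coeff x (S a * S (a+1)) ≤ (U' : ℤ) + 1 := by
    rw [pair_coeff_eq a x ha]
    calc (∑ t ∈ range (Xq + 1), (if a ∣ x - (a+1)*t then (1:ℤ) else 0))
        = ∑ t ∈ (range (Xq+1)).filter (fun t => a ∣ x - (a+1)*t), (1:ℤ) := by
          rw [Finset.sum_filter]
      _ = ((range (Xq+1)).filter (fun t => a ∣ x - (a+1)*t)).card := by
          rw [Finset.sum_const, nsmul_eq_mul, mul_one]
      _ ≤ (((range (U'+1)).image (fun u => ρ + a*u)).card : ℤ) := by
          exact_mod_cast Finset.card_le_card hsub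
      _ ≤ ((U' : ℤ) + 1) := by
          have := Finset.card_image_le (f := fun u => ρ + a*u) (s := range (U'+1))
          rw [Finset.card_range] at this
          exact_mod_cast this
  have haU : (a:ℤ) * U' ≤ (Xq:ℤ) := by
    have h : a * U' ≤ Xq := by rw [hU'def, mul_comm]; exact Nat.div_mul_le_self _ _
    exact_mod_cast h
  calc ((a*(a+1):ℕ):ℤ) * coeff x (S a * S (a+1)) ≤ ((a*(a+1):ℕ):ℤ) * ((U':ℤ)+1) :=
      mul_le_mul_of_nonneg_left hle1 (by positivity)
    _ ≤ (x:ℤ) + ((a*(a+1):ℕ):ℤ) := by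
      have hXx : ((a:ℤ)+1) * Xq ≤ (x:ℤ) := by
        have h : (a+1) * Xq ≤ x := by rw [hXdef, mul_comm]; exact Nat.div_mul_le_self _ _
        exact_mod_cast h
      push_cast
      nlinarith [mul_le_mul_of_nonneg_left haU (by positivity : (0:ℤ) ≤ (a:ℤ)+1)]



set_option maxHeartbeats 1000000 in
lemma Q_lower (s : ℕ) (hs : 1 ≤ s) :
    ∃ B0 C0 : ℕ, 1 ≤ B0 ∧ ∀ y : ℕ,
      (y:ℤ)^2 - (C0:ℤ) * y
        ≤ (B0:ℤ) * coeff y ((S s - X * S (s+1)) * (S (s+2) * S (s+2+1))) := by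
  set M23 := (s+2)*(s+2+1) with hM23
  set cc := (s+2+1)^2 + M23 with hcc
  refine ⟨2 * M23 * (s+1)^2, 2 * (s+1)^2 * cc, Nat.one_le_iff_ne_zero.mpr (by positivity), ?_⟩
  intro y
  rcases Nat.eq_zero_or_pos y with rfl | hy
  · have hc0 : coeff 0 ((S s - X * S (s+1)) * (S (s+2) * S (s+2+1))) = 1 := by
      rw [coeff_mul]
      rw [Finset.Nat.antidiagonal_zero]
      rw [Finset.sum_singleton]
      have h1 : coeff 0 (S s - X * S (s+1)) = 1 := by
        rw [map_sub, coeff_S, if_pos (dvd_zero s)]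
        have : coeff 0 (X * S (s+1)) = 0 := by
          rw [mul_comm, ← pow_one (X : PowerSeries ℤ), coeff_mul_X_pow']
          norm_num
        rw [this]; ring
      have h2 : coeff 0 (S (s+2) * S (s+2+1)) = 1 := by
        rw [coeff_mul, Finset.Nat.antidiagonal_zero, Finset.sum_singleton, coeff_S, coeff_S]
        rw [if_pos (dvd_zero _), if_pos (dvd_zero _)]; ring
      rw [h1, h2]; ring
    rw [hc0]
    push_cast
    positivity
  · obtain ⟨z, rfl⟩ : ∃ z, y = z + 1 := ⟨y - 1, by omega⟩
    set y := z + 1 with hydef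
    set Tb := z / (s+1) with hTbdef
    -- coefficient decomposition
    have hdecomp : coeff y ((S s - X * S (s+1)) * (S (s+2) * S (s+2+1)))
        = (∑ t ∈ range (y / s + 1), coeff (y - s*t) (S (s+2) * S (s+2+1)))
          - (∑ t ∈ range (z / (s+1) + 1), coeff (z - (s+1)*t) (S (s+2) * S (s+2+1))) := by
      have e1 : (S s - X * S (s+1)) * (S (s+2) * S (s+2+1))
          = S s * (S (s+2) * S (s+2+1)) - X * (S (s+1) * (S (s+2) * S (s+2+1))) := by
        ring
      rw [e1, map_sub, coeff_S_mul s hs, coeff_succ_X_mul, coeff_S_mul (s+1) (by omega)]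
    set h2 : ℕ → ℤ := fun w => coeff w (S (s+2) * S (s+2+1)) with hh2
    have hsubset : range (Tb + 1) ⊆ range (y / s + 1) := by
      apply Finset.range_subset_range.mpr
      have : Tb ≤ y / s := by
        calc Tb = z / (s+1) := rfl
          _ ≤ z / s := Nat.div_le_div_left (by omega) (by omega)
          _ ≤ y / s := Nat.div_le_div_right (by omega)
      omega
    have hA : (∑ t ∈ range (Tb + 1), h2 (y - s*t))
        ≤ ∑ t ∈ range (y / s + 1), h2 (y - s*t) :=
      Finset.sum_le_sum_of_subset_of_nonneg hsubset (fun i _ _ => pair_nonneg (s+2) _)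
    have hQ1 : (∑ t ∈ range (Tb + 1), (h2 (y - s*t) - h2 (z - (s+1)*t)))
        ≤ coeff y ((S s - X * S (s+1)) * (S (s+2) * S (s+2+1))) := by
      rw [hdecomp, Finset.sum_sub_distrib]
      have : Tb + 1 = z / (s+1) + 1 := by rw [hTbdef]
      rw [this]
      exact sub_le_sub_right hA _
    -- per-term bound
    have hterm : ∀ t ∈ range (Tb + 1),
        ((t:ℤ) + 1) - (cc : ℤ) ≤ (M23 : ℤ) * (h2 (y - s*t) - h2 (z - (s+1)*t)) := by
      intro t ht
      rw [mem_range, Nat.lt_succ_iff] at ht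
      have hts : (s+1) * t ≤ z := by
        calc (s+1) * t ≤ (s+1) * Tb := Nat.mul_le_mul_left _ ht
          _ ≤ z := by rw [hTbdef, mul_comm]; exact Nat.div_mul_le_self _ _
      have hts2 : s * t ≤ z := by nlinarith
      have hl := pair_lower (s+2) (by omega) (y - s*t)
      have hu := pair_upper (s+2) (by omega) (z - (s+1)*t)
      have hcast1 : ((y - s*t : ℕ) : ℤ) = (y:ℤ) - (s:ℤ)*t := by
        rw [Nat.cast_sub (by omega)]; push_cast; ring
      have hcast2 : ((z - (s+1)*t : ℕ) : ℤ) = (z:ℤ) - ((s:ℤ)+1)*t := by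
        rw [Nat.cast_sub hts]; push_cast; ring
      rw [hcast1] at hl
      rw [hcast2] at hu
      have hMeq : ((s+2)*((s+2)+1) : ℕ) = M23 := by rw [hM23]
      rw [hMeq] at hl hu
      have hcc : (((s+2+1)^2 : ℕ) : ℤ) + (M23:ℤ) = (cc : ℤ) := by
        rw [hcc]; push_cast; ring
      have hy' : (y:ℤ) = (z:ℤ) + 1 := by rw [hydef]; push_cast; ring
      rw [mul_sub]
      -- hl : y - s t - (s+3)^2 ≤ M23 * h2(y - st)
      -- hu : M23 * h2(z - (s+1)t) ≤ z - (s+1)t + M23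
      have := sub_le_sub hl hu
      calc ((t:ℤ) + 1) - (cc : ℤ)
          = ((y:ℤ) - (s:ℤ)*t - (((s+2+1)^2 : ℕ):ℤ)) - ((z:ℤ) - ((s:ℤ)+1)*t + (M23:ℤ)) := by
            rw [← hcc, hy']; push_cast; ring
        _ ≤ _ := this
    -- sum the per-term bounds
    have hsum : ((∑ t ∈ range (Tb + 1), ((t:ℤ) + 1)) - ((Tb:ℤ)+1) * (cc:ℤ))
        ≤ (M23:ℤ) * coeff y ((S s - X * S (s+1)) * (S (s+2) * S (s+2+1))) := by
      have h1 : (∑ t ∈ range (Tb + 1), (((t:ℤ) + 1) - (cc:ℤ)))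
          ≤ ∑ t ∈ range (Tb + 1), (M23 : ℤ) * (h2 (y - s*t) - h2 (z - (s+1)*t)) :=
        Finset.sum_le_sum hterm
      rw [Finset.sum_sub_distrib, Finset.sum_const, Finset.card_range, ← Finset.mul_sum] at h1
      calc ((∑ t ∈ range (Tb + 1), ((t:ℤ) + 1)) - ((Tb:ℤ)+1) * (cc:ℤ))
          = (∑ t ∈ range (Tb + 1), ((t:ℤ) + 1)) - (Tb+1) • (cc:ℤ) := by
            rw [nsmul_eq_mul]; push_cast; ring
        _ ≤ (M23:ℤ) * ∑ t ∈ range (Tb + 1), (h2 (y - s*t) - h2 (z - (s+1)*t)) := h1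
        _ ≤ (M23:ℤ) * coeff y ((S s - X * S (s+1)) * (S (s+2) * S (s+2+1))) :=
            mul_le_mul_of_nonneg_left hQ1 (by positivity)
    -- Gauss sum
    have hgauss : (∑ t ∈ range (Tb + 1), ((t:ℤ) + 1)) * 2 = ((Tb:ℤ)+1) * ((Tb:ℤ)+2) := by
      have hn : (∑ t ∈ range (Tb + 1), (t + 1)) * 2 = (Tb+1) * (Tb+2) := by
        have h0 : ∑ i ∈ range (Tb + 2), i = (∑ t ∈ range (Tb + 1), (t+1)) + 0 :=
          Finset.sum_range_succ' id (Tb+1)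
        have h1 := Finset.sum_range_id_mul_two (Tb + 2)
        have h2 : (Tb+2) * (Tb+2-1) = (Tb+1)*(Tb+2) := by
          have he : Tb+2-1 = Tb+1 := rfl
          rw [he]; ring
        omega
      have := congrArg (fun m : ℕ => (m : ℤ)) hn
      push_cast at this
      linarith [this]
    -- final arithmetic
    have hy1 : (y : ℤ) ≤ ((s:ℤ)+1) * ((Tb:ℤ)+1) := by
      have hmod := Nat.div_add_mod z (s+1)
      rw [← hTbdef] at hmod
      have hr : z % (s+1) < s + 1 := Nat.mod_lt _ (by omega)
      have hmodZ : ((s:ℤ)+1) * (Tb:ℤ) + ((z % (s+1) : ℕ):ℤ) = (z:ℤ) := by exact_mod_cast hmod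
      have hrZ : ((z % (s+1) : ℕ):ℤ) < (s:ℤ)+1 := by exact_mod_cast hr
      have hyz : (y:ℤ) = (z:ℤ)+1 := by rw [hydef]; push_cast; ring
      nlinarith
    have hTby : ((Tb:ℤ)+1) ≤ (y:ℤ) := by
      have h1 : Tb ≤ z := Nat.div_le_self _ _
      have h2 : Tb + 1 ≤ y := by omega
      exact_mod_cast h2
    have hQnonneg := hsum
    -- combine: B0 * Q ≥ (s+1)^2 * (2*M23*Q) ≥ ...
    have hmain : ((y:ℤ))^2 - (2 * (s+1)^2 * cc : ℕ) * (y:ℤ)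
        ≤ ((2 * M23 * (s+1)^2 : ℕ) : ℤ)
          * coeff y ((S s - X * S (s+1)) * (S (s+2) * S (s+2+1))) := by
      set Qv := coeff y ((S s - X * S (s+1)) * (S (s+2) * S (s+2+1))) with hQv
      have h2' : ((Tb:ℤ)+1) * ((Tb:ℤ)+2) - 2 * ((Tb:ℤ)+1) * (cc:ℤ) ≤ 2 * (M23:ℤ) * Qv := by
        nlinarith [hsum, hgauss]
      have hsq : (y:ℤ)^2 ≤ (((s:ℤ)+1) * ((Tb:ℤ)+1))^2 := by
        have h0 : (0:ℤ) ≤ (y:ℤ) := by positivity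
        nlinarith
      have h3 : ((s:ℤ)+1)^2 * (((Tb:ℤ)+1) * ((Tb:ℤ)+2) - 2 * ((Tb:ℤ)+1) * (cc:ℤ))
          ≤ ((s:ℤ)+1)^2 * (2 * (M23:ℤ) * Qv) :=
        mul_le_mul_of_nonneg_left h2' (by positivity)
      have h4 : 2 * ((s:ℤ)+1)^2 * (cc:ℤ) * ((Tb:ℤ)+1) ≤ 2 * ((s:ℤ)+1)^2 * (cc:ℤ) * (y:ℤ) :=
        mul_le_mul_of_nonneg_left hTby (by positivity)
      have h5 : ((s:ℤ)+1)^2*(((Tb:ℤ)+1)*((Tb:ℤ)+1)) ≤ ((s:ℤ)+1)^2*(((Tb:ℤ)+1)*((Tb:ℤ)+2)) := by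
        nlinarith [sq_nonneg ((s:ℤ)+1), (by positivity : (0:ℤ) ≤ ((Tb:ℤ)+1))]
      push_cast at hsq h3 h4 h5 ⊢
      linarith [h3, h4, hsq, h5]
    exact_mod_cast hmain


def NN (F : PowerSeries ℤ) : Prop := ∀ n, 0 ≤ coeff n F

lemma NN_mul {F G} (hF : NN F) (hG : NN G) : NN (F * G) :=
  fun n => coeff_mul_nonneg F G hF hG n

lemma NN_add {F G} (hF : NN F) (hG : NN G) : NN (F + G) := by
  intro n; rw [map_add]; exact add_nonneg (hF n) (hG n)

lemma NN_S (a : ℕ) : NN (S a) := S_nonneg a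

lemma NN_X_pow (d : ℕ) : NN ((X : PowerSeries ℤ)^d) := by
  intro n; rw [coeff_X_pow]; split <;> norm_num

lemma NN_X : NN (X : PowerSeries ℤ) := by
  intro n
  have := NN_X_pow 1 n
  rwa [pow_one] at this

lemma NN_prodS (ms : Multiset ℕ) : NN (prodS ms) := prodS_nonneg ms

noncomputable def geom (m : ℕ) : PowerSeries ℤ := ∑ j ∈ range m, (X : PowerSeries ℤ)^j

lemma NN_geom (m : ℕ) : NN (geom m) := by
  intro n
  rw [geom, map_sum]
  exact Finset.sum_nonneg fun j _ => NN_X_pow j n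

lemma one_sub_pow_eq (m : ℕ) : (1 - (X : PowerSeries ℤ)^m) = geom m * (1 - X) := by
  have h := geom_sum_mul (X : PowerSeries ℤ) m
  rw [geom]
  linear_combination h

def UBC (F : PowerSeries ℤ) (d C : ℕ) : Prop :=
  ∀ m : ℕ, coeff m F ≤ (C:ℤ) * ((m:ℤ)+1)^d

lemma UBC_prodS (ms : Multiset ℕ) : UBC (prodS ms) (Multiset.card ms - 1) 1 := by
  intro m
  simpa using prodS_ub ms m

lemma UBC_X_pow_mul {F d C} (δ : ℕ) (h : UBC F d C) : UBC ((X:PowerSeries ℤ)^δ * F) d C := by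
  intro m
  rw [coeff_X_pow_mul']
  split
  · calc coeff (m - δ) F ≤ (C:ℤ) * (((m - δ : ℕ):ℤ)+1)^d := h _
      _ ≤ (C:ℤ) * ((m:ℤ)+1)^d := by
        apply mul_le_mul_of_nonneg_left _ (by positivity)
        apply pow_le_pow_left₀ (by positivity)
        have h1 : (m - δ : ℕ) ≤ m := Nat.sub_le _ _
        have h2 : ((m - δ : ℕ):ℤ) ≤ (m:ℤ) := by exact_mod_cast h1
        linarith
  · positivity

lemma UBC_geom_mul {F d C} (m : ℕ) (h : UBC F d C) : UBC (geom m * F) d (m*C) := by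
  intro n
  rw [geom, Finset.sum_mul, map_sum]
  calc (∑ j ∈ range m, coeff n ((X:PowerSeries ℤ)^j * F))
      ≤ ∑ j ∈ range m, (C:ℤ) * ((n:ℤ)+1)^d :=
        Finset.sum_le_sum fun j _ => UBC_X_pow_mul j h n
    _ = (m:ℤ) * ((C:ℤ) * ((n:ℤ)+1)^d) := by
        rw [Finset.sum_const, Finset.card_range, nsmul_eq_mul]
    _ = ((m*C : ℕ):ℤ) * ((n:ℤ)+1)^d := by push_cast; ring

lemma pair_id (a : ℕ) (ha : 1 ≤ a) :
    (1 - (X:PowerSeries ℤ)) * (S a * S (a+1)) = S a - X * S (a+1) := by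
  have hu : ((1 - (X:PowerSeries ℤ)^a) * (1 - X^(a+1))) ≠ 0 := by
    intro hzero
    have hc := congrArg (constantCoeff) hzero
    rw [map_mul, map_sub, map_sub, map_one, map_pow, constantCoeff_X] at hc
    simp [zero_pow (by omega : a ≠ 0), zero_pow (by omega : a + 1 ≠ 0)] at hc
  apply mul_left_cancel₀ hu
  have h1 : (1 - (X:PowerSeries ℤ)^a) * S a = 1 := one_sub_mul_S a ha
  have h2 : (1 - (X:PowerSeries ℤ)^(a+1)) * S (a+1) = 1 := one_sub_mul_S (a+1) (by omega)
  calc (1 - (X:PowerSeries ℤ)^a) * (1 - X^(a+1)) * ((1 - X) * (S a * S (a+1)))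
      = (1 - X) * (((1 - X^a) * S a) * ((1 - X^(a+1)) * S (a+1))) := by ring
    _ = (1 - X) := by rw [h1, h2]; ring
    _ = (1 - X^(a+1)) - X * (1 - X^a) := by ring
    _ = ((1 - X^(a+1)) * ((1-X^a) * S a)) - X * ((1-X^a) * ((1 - X^(a+1)) * S (a+1))) := by
        rw [h1, h2]; ring
    _ = (1 - (X:PowerSeries ℤ)^a) * (1 - X^(a+1)) * (S a - X * S (a+1)) := by ring


set_option maxHeartbeats 1000000 in
lemma QS_lower (s : ℕ) (hs : 1 ≤ s) (ms : Multiset ℕ) (hms : ∀ x ∈ ms, 1 ≤ x) :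
    ∃ B c C : ℕ, 1 ≤ B ∧ ∀ y : ℕ,
      (((y/2 - c) ^ (Multiset.card ms + 2) : ℕ) : ℤ)
          - (C:ℤ) * ((y:ℤ)+1)^(Multiset.card ms + 1)
        ≤ (B:ℤ) * coeff y (((S s - X * S (s+1)) * (S (s+2) * S (s+2+1))) * prodS ms) := by
  obtain ⟨B0, C0, hB0, hQ⟩ := Q_lower s hs
  obtain ⟨B2, c2, hB2, hPS⟩ := lower_chain ms hms
  set dd := Multiset.card ms with hdd
  refine ⟨B0 * B2, c2, B2 * C0, Nat.one_le_iff_ne_zero.mpr (by positivity), ?_⟩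
  intro y
  set Qser := (S s - X * S (s+1)) * (S (s+2) * S (s+2+1)) with hQser
  set Rt := prodS ms with hRt
  have hr : ∀ j, 0 ≤ coeff j Rt := fun j => prodS_nonneg ms j
  -- B0 * coeff = sum of B0 * Qc i * r j
  have h1 : (∑ p ∈ Finset.HasAntidiagonal.antidiagonal y, (((p.1:ℤ)^2 - (C0:ℤ)*p.1) * coeff p.2 Rt))
      ≤ (B0:ℤ) * coeff y (Qser * Rt) := by
    rw [coeff_mul, Finset.mul_sum]
    apply Finset.sum_le_sum
    intro p _
    calc ((p.1:ℤ)^2 - (C0:ℤ)*p.1) * coeff p.2 Rt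
        ≤ ((B0:ℤ) * coeff p.1 Qser) * coeff p.2 Rt :=
          mul_le_mul_of_nonneg_right (hQ p.1) (hr p.2)
      _ = (B0:ℤ) * (coeff p.1 Qser * coeff p.2 Rt) := by ring
  have hsplit : (∑ p ∈ Finset.HasAntidiagonal.antidiagonal y, (((p.1:ℤ)^2 - (C0:ℤ)*p.1) * coeff p.2 Rt))
      = (∑ p ∈ Finset.HasAntidiagonal.antidiagonal y, ((p.1:ℤ)^2 * coeff p.2 Rt))
        - (C0:ℤ) * (∑ p ∈ Finset.HasAntidiagonal.antidiagonal y, ((p.1:ℤ) * coeff p.2 Rt)) := by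
    rw [Finset.mul_sum, ← Finset.sum_sub_distrib]
    apply Finset.sum_congr rfl
    intro p _
    ring
  -- reindex to range sums over j
  have hswap2 : (∑ p ∈ Finset.HasAntidiagonal.antidiagonal y, ((p.1:ℤ)^2 * coeff p.2 Rt))
      = ∑ j ∈ range (y+1), (coeff j Rt * ((y - j : ℕ):ℤ)^2) := by
    rw [← Finset.Nat.sum_antidiagonal_swap (f := fun p => ((p.1:ℤ))^2 * coeff p.2 Rt)]
    simp only [Prod.fst_swap, Prod.snd_swap]
    rw [Finset.Nat.sum_antidiagonal_eq_sum_range_succ_mk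
      (fun p => ((p.2:ℤ))^2 * coeff p.1 Rt)]
    apply Finset.sum_congr rfl
    intro j _
    ring
  have hswap1 : (∑ p ∈ Finset.HasAntidiagonal.antidiagonal y, ((p.1:ℤ) * coeff p.2 Rt))
      = ∑ j ∈ range (y+1), (coeff j Rt * ((y - j : ℕ):ℤ)) := by
    rw [← Finset.Nat.sum_antidiagonal_swap (f := fun p => ((p.1:ℤ)) * coeff p.2 Rt)]
    simp only [Prod.fst_swap, Prod.snd_swap]
    rw [Finset.Nat.sum_antidiagonal_eq_sum_range_succ_mk
      (fun p => ((p.2:ℤ)) * coeff p.1 Rt)]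
    apply Finset.sum_congr rfl
    intro j _
    ring
  -- lower bound on the main sum
  have hS1 : prodS (1 ::ₘ ms) = S 1 * Rt := by rw [prodS_cons, hRt]
  have hmainlow : (((y - y/2 : ℕ):ℤ))^2 * coeff (y/2) (S 1 * Rt)
      ≤ ∑ j ∈ range (y+1), (coeff j Rt * ((y - j : ℕ):ℤ)^2) := by
    have hsubset : range (y/2 + 1) ⊆ range (y+1) := Finset.range_subset_range.mpr (by omega)
    have hA : (∑ j ∈ range (y/2+1), coeff j Rt * ((y - j : ℕ):ℤ)^2)
        ≤ ∑ j ∈ range (y+1), coeff j Rt * ((y - j : ℕ):ℤ)^2 :=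
      Finset.sum_le_sum_of_subset_of_nonneg hsubset
        (fun i _ _ => mul_nonneg (hr i) (by positivity))
    have hB : ∀ j ∈ range (y/2+1),
        coeff j Rt * (((y - y/2 : ℕ):ℤ))^2 ≤ coeff j Rt * ((y - j : ℕ):ℤ)^2 := by
      intro j hj
      rw [mem_range, Nat.lt_succ_iff] at hj
      apply mul_le_mul_of_nonneg_left _ (hr j)
      have h1 : (y - y/2 : ℕ) ≤ (y - j : ℕ) := by omega
      have h2 : (((y - y/2:ℕ)):ℤ) ≤ ((y - j : ℕ):ℤ) := by exact_mod_cast h1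
      apply pow_le_pow_left₀ (by positivity) h2
    calc (((y - y/2 : ℕ):ℤ))^2 * coeff (y/2) (S 1 * Rt)
        = ∑ j ∈ range (y/2+1), coeff j Rt * (((y - y/2 : ℕ):ℤ))^2 := by
          rw [coeff_one_mul_S, Finset.mul_sum]
          apply Finset.sum_congr rfl
          intro j _
          ring
      _ ≤ ∑ j ∈ range (y/2+1), coeff j Rt * ((y - j : ℕ):ℤ)^2 := Finset.sum_le_sum hB
      _ ≤ _ := hA
  -- upper bound on the error sum
  have herr : (∑ j ∈ range (y+1), (coeff j Rt * ((y - j : ℕ):ℤ)))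
      ≤ (y:ℤ) * coeff y (S 1 * Rt) := by
    calc (∑ j ∈ range (y+1), (coeff j Rt * ((y - j : ℕ):ℤ)))
        ≤ ∑ j ∈ range (y+1), (coeff j Rt * (y:ℤ)) := by
          apply Finset.sum_le_sum
          intro j _
          apply mul_le_mul_of_nonneg_left _ (hr j)
          exact_mod_cast Nat.sub_le y j
      _ = (y:ℤ) * coeff y (S 1 * Rt) := by
          rw [coeff_one_mul_S, Finset.mul_sum]
          apply Finset.sum_congr rfl
          intro j _
          ring
  -- PS bounds
  have hPShalf : (((y/2 - c2)^dd : ℕ) : ℤ) ≤ (B2:ℤ) * coeff (y/2) (S 1 * Rt) := by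
    rw [← hS1]; exact hPS (y/2)
  have hPSup : coeff y (S 1 * Rt) ≤ ((y:ℤ)+1)^dd := by
    have h := prodS_ub (1 ::ₘ ms) y
    rw [hS1] at h
    simpa using h
  have hPSpos : 0 ≤ coeff (y/2) (S 1 * Rt) := by
    rw [← hS1]; exact prodS_nonneg _ _
  -- error sum is bounded
  have herr2 : (C0:ℤ) * (∑ j ∈ range (y+1), (coeff j Rt * ((y - j : ℕ):ℤ)))
      ≤ (C0:ℤ) * (((y:ℤ)+1)^(dd+1)) := by
    apply mul_le_mul_of_nonneg_left _ (by positivity)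
    calc (∑ j ∈ range (y+1), (coeff j Rt * ((y - j : ℕ):ℤ)))
        ≤ (y:ℤ) * coeff y (S 1 * Rt) := herr
      _ ≤ (y:ℤ) * ((y:ℤ)+1)^dd := by
          apply mul_le_mul_of_nonneg_left hPSup (by positivity)
      _ ≤ ((y:ℤ)+1) * ((y:ℤ)+1)^dd := by
          apply mul_le_mul_of_nonneg_right _ (by positivity)
          push_cast; linarith
      _ = ((y:ℤ)+1)^(dd+1) := by rw [pow_succ]; ring
  -- main term with B2
  have hmain2 : (((y/2 - c2)^(dd+2) : ℕ) : ℤ)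
      ≤ (B2:ℤ) * ((((y - y/2 : ℕ):ℤ))^2 * coeff (y/2) (S 1 * Rt)) := by
    have hnat : ((y/2 - c2)^(dd+2) : ℕ) ≤ (y - y/2)^2 * ((y/2 - c2)^dd) := by
      have h1 : (y/2 - c2) ≤ (y - y/2) := by omega
      calc (y/2 - c2)^(dd+2) = (y/2 - c2)^2 * (y/2 - c2)^dd := by ring
        _ ≤ (y - y/2)^2 * (y/2 - c2)^dd :=
          Nat.mul_le_mul_right _ (Nat.pow_le_pow_left h1 2)
    calc (((y/2 - c2)^(dd+2) : ℕ) : ℤ)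
        ≤ (((y - y/2)^2 * ((y/2 - c2)^dd) : ℕ) : ℤ) := by exact_mod_cast hnat
      _ = (((y - y/2 : ℕ):ℤ))^2 * (((y/2 - c2)^dd : ℕ) : ℤ) := by push_cast; ring
      _ ≤ (((y - y/2 : ℕ):ℤ))^2 * ((B2:ℤ) * coeff (y/2) (S 1 * Rt)) :=
          mul_le_mul_of_nonneg_left hPShalf (by positivity)
      _ = (B2:ℤ) * ((((y - y/2 : ℕ):ℤ))^2 * coeff (y/2) (S 1 * Rt)) := by ring
  -- put it all together
  have hfin : (((y/2 - c2)^(dd+2) : ℕ) : ℤ) - ((B2 * C0 : ℕ):ℤ) * ((y:ℤ)+1)^(dd+1)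
      ≤ ((B0 * B2 : ℕ):ℤ) * coeff y (Qser * Rt) := by
    have hc1 : (B2:ℤ) * ((∑ p ∈ Finset.HasAntidiagonal.antidiagonal y, ((p.1:ℤ)^2 * coeff p.2 Rt))
        - (C0:ℤ) * (∑ p ∈ Finset.HasAntidiagonal.antidiagonal y, ((p.1:ℤ) * coeff p.2 Rt)))
        ≤ (B2:ℤ) * ((B0:ℤ) * coeff y (Qser * Rt)) := by
      apply mul_le_mul_of_nonneg_left _ (by positivity)
      rw [← hsplit]
      exact h1
    rw [hswap1, hswap2] at hc1
    have hmm : (B2:ℤ) * (∑ j ∈ range (y+1), (coeff j Rt * ((y - j : ℕ):ℤ)^2))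
        ≥ (((y/2 - c2)^(dd+2) : ℕ) : ℤ) := by
      calc (((y/2 - c2)^(dd+2) : ℕ) : ℤ)
          ≤ (B2:ℤ) * ((((y - y/2 : ℕ):ℤ))^2 * coeff (y/2) (S 1 * Rt)) := hmain2
        _ ≤ (B2:ℤ) * (∑ j ∈ range (y+1), (coeff j Rt * ((y - j : ℕ):ℤ)^2)) :=
            mul_le_mul_of_nonneg_left hmainlow (by positivity)
    have hee : (B2:ℤ) * ((C0:ℤ) * (∑ j ∈ range (y+1), (coeff j Rt * ((y - j : ℕ):ℤ))))
        ≤ ((B2 * C0 : ℕ):ℤ) * ((y:ℤ)+1)^(dd+1) := by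
      calc (B2:ℤ) * ((C0:ℤ) * (∑ j ∈ range (y+1), (coeff j Rt * ((y - j : ℕ):ℤ))))
          ≤ (B2:ℤ) * ((C0:ℤ) * (((y:ℤ)+1)^(dd+1))) :=
            mul_le_mul_of_nonneg_left herr2 (by positivity)
        _ = ((B2 * C0 : ℕ):ℤ) * ((y:ℤ)+1)^(dd+1) := by push_cast; ring
    have hexp : ((B0 * B2 : ℕ):ℤ) * coeff y (Qser * Rt)
        = (B2:ℤ) * ((B0:ℤ) * coeff y (Qser * Rt)) := by push_cast; ring
    rw [hexp]
    nlinarith [hc1, hmm, hee]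
  exact hfin


lemma UBC_add {F G d C C'} (hF : UBC F d C) (hG : UBC G d C') : UBC (F + G) d (C + C') := by
  intro m
  rw [map_add]
  have := add_le_add (hF m) (hG m)
  calc coeff m F + coeff m G ≤ (C:ℤ)*((m:ℤ)+1)^d + (C':ℤ)*((m:ℤ)+1)^d := this
    _ = ((C + C' : ℕ):ℤ) * ((m:ℤ)+1)^d := by push_cast; ring

end BU

open BU

set_option maxHeartbeats 2000000 in
theorem stmt_1 (L s r k₁ k₂ : ℕ) (hL : 3 ≤ L) (hs : 1 ≤ s)
    (hk₂ : 1 ≤ k₂) (hk : k₂ < k₁)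
    (H : PowerSeries ℤ)
    -- `H` is the quotient `(q^r(1 - q^{k₁}) - (1 - q^{k₂})) / (q^s;q)_{L+1}`,
    -- characterized by multiplying through by `(q^s;q)_{L+1} = ∏_{i=0}^{L} (1 - q^{s+i})`,
    -- which has constant term 1 and hence is invertible in ℤ[[q]].
    (hH : H * ∏ i ∈ Finset.range (L + 1), (1 - (X : PowerSeries ℤ) ^ (s + i))
        = X ^ r * (1 - X ^ k₁) - (1 - X ^ k₂)) :
    ∃ M : ℕ, ∀ n : ℕ, M < n → 0 < coeff n H := by
  obtain ⟨k, hk1, hkpos⟩ : ∃ k, k₁ = k₂ + k ∧ 1 ≤ k := ⟨k₁ - k₂, by omega, by omega⟩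
  -- the tail multiset
  set msR : Multiset ℕ := ((Finset.Ico 4 (L+1)).val.map (fun i => s + i)) with hmsR
  have hmsR1 : ∀ x ∈ msR, 1 ≤ x := by
    intro x hx
    rw [hmsR, Multiset.mem_map] at hx
    obtain ⟨i, _, rfl⟩ := hx
    omega
  have hcardR : Multiset.card msR = L - 3 := by
    rw [hmsR, Multiset.card_map]
    have h1 : Multiset.card (Finset.Ico 4 (L+1)).val = (Finset.Ico 4 (L+1)).card := rfl
    rw [h1, Nat.card_Ico]
    omega
  set Rt := prodS msR with hRtdef
  have hRt_prod : (∏ i ∈ Finset.Ico 4 (L+1), S (s+i)) = Rt := by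
    rw [hRtdef, hmsR, prodS, Multiset.map_map]
    rfl
  -- P and inverse property
  set P := ∏ i ∈ Finset.range (L+1), S (s+i) with hPdef
  have hDP : (∏ i ∈ Finset.range (L+1), (1 - (X:PowerSeries ℤ)^(s+i))) * P = 1 := by
    rw [hPdef, ← Finset.prod_mul_distrib]
    apply Finset.prod_eq_one
    intro i _
    exact one_sub_mul_S (s+i) (by omega)
  have hHP : H = ((X:PowerSeries ℤ)^r * (1 - X^k₁) - (1 - X^k₂)) * P := by
    calc H = H * 1 := (mul_one H).symm
      _ = H * ((∏ i ∈ Finset.range (L+1), (1 - (X:PowerSeries ℤ)^(s+i))) * P) := by rw [hDP]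
      _ = (H * ∏ i ∈ Finset.range (L+1), (1 - (X:PowerSeries ℤ)^(s+i))) * P := by ring
      _ = ((X:PowerSeries ℤ)^r * (1 - X^k₁) - (1 - X^k₂)) * P := by rw [hH]
  -- split P
  have hPsplit : P = (S s * S (s+1)) * ((S (s+2) * S (s+2+1)) * Rt) := by
    rw [hPdef, Finset.range_eq_Ico,
      ← Finset.prod_Ico_consecutive (fun i => S (s+i)) (by omega : 0 ≤ 4) (by omega : 4 ≤ L+1)]
    rw [hRt_prod]
    have h04 : Finset.Ico 0 4 = Finset.range 4 := by rw [Finset.range_eq_Ico]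
    rw [h04]
    rw [Finset.prod_range_succ, Finset.prod_range_succ, Finset.prod_range_succ,
      Finset.prod_range_one]
    have e0 : s + 0 = s := by omega
    have e3 : s + 3 = s + 2 + 1 := by omega
    rw [e0, e3]
    ring
  -- decomposition of H
  set QS := ((S s - X * S (s+1)) * (S (s+2) * S (s+2+1))) * Rt with hQSdef
  set W2p := (S s - X * S (s+1)) * ((S (s+2) - X * S (s+2+1)) * Rt) with hW2def
  have hXP : (1 - (X:PowerSeries ℤ)) * P = QS := by
    rw [hPsplit, hQSdef]
    have hp := pair_id s hs
    calc (1-(X:PowerSeries ℤ)) * ((S s * S (s+1)) * ((S (s+2) * S (s+2+1)) * Rt))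
        = ((1-X) * (S s * S (s+1))) * ((S (s+2) * S (s+2+1)) * Rt) := by ring
      _ = (S s - X*S (s+1)) * ((S (s+2) * S (s+2+1)) * Rt) := by rw [hp]
      _ = ((S s - X*S (s+1)) * (S (s+2) * S (s+2+1))) * Rt := by ring
  have hXQS : (1 - (X:PowerSeries ℤ)) * QS = W2p := by
    have hp := pair_id (s+2) (by omega)
    calc (1-(X:PowerSeries ℤ)) * QS
        = (S s - X*S (s+1)) * (((1-X) * (S (s+2) * S (s+2+1))) * Rt) := by rw [hQSdef]; ring
      _ = (S s - X*S (s+1)) * ((S (s+2) - X*S (s+2+1)) * Rt) := by rw [hp]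
      _ = W2p := by rw [hW2def]
  have hH2 : H = (X:PowerSeries ℤ)^(r+k₂) * (geom k * QS) - geom k₂ * (geom r * W2p) := by
    have eN : (X:PowerSeries ℤ)^r * (1 - X^k₁) - (1 - X^k₂)
        = X^(r+k₂) * (1 - X^k) - (1-X^k₂)*(1-X^r) := by
      rw [hk1]; ring
    rw [hHP, eN, one_sub_pow_eq k, one_sub_pow_eq k₂, one_sub_pow_eq r]
    calc ((X:PowerSeries ℤ)^(r+k₂) * (geom k * (1-X)) - (geom k₂ * (1-X)) * (geom r * (1-X))) * P
        = X^(r+k₂) * (geom k * ((1-X) * P))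
          - geom k₂ * (geom r * ((1-X) * ((1-X) * P))) := by ring
      _ = X^(r+k₂) * (geom k * QS) - geom k₂ * (geom r * ((1-X) * QS)) := by rw [hXP]
      _ = X^(r+k₂) * (geom k * QS) - geom k₂ * (geom r * W2p) := by rw [hXQS]
  -- lower bound for QS coefficients
  obtain ⟨B, c, C, hB, hQS0⟩ := QS_lower s hs msR hmsR1
  have hQS' : ∀ y : ℕ, (((y/2 - c) ^ (L-1) : ℕ) : ℤ) - (C:ℤ) * ((y:ℤ)+1)^(L-2)
      ≤ (B:ℤ) * coeff y QS := by
    intro y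
    have h := hQS0 y
    rw [hcardR] at h
    have e1 : L - 3 + 2 = L - 1 := by omega
    have e2 : L - 3 + 1 = L - 2 := by omega
    rw [e1, e2] at h
    exact h
  -- upper bound for the W2p part
  set ACp := prodS (s ::ₘ (s+2) ::ₘ msR) with hACdef
  set BDp := prodS ((s+1) ::ₘ (s+2+1) ::ₘ msR) with hBDdef
  set ADp := prodS (s ::ₘ (s+2+1) ::ₘ msR) with hADdef
  set BCp := prodS ((s+1) ::ₘ (s+2) ::ₘ msR) with hBCdef
  have hW2split : W2p = (ACp + X^2 * BDp) - ((X * ADp) + (X * BCp)) := by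
    rw [hW2def, hACdef, hBDdef, hADdef, hBCdef]
    simp only [prodS_cons]
    rw [← hRtdef]
    ring
  have hcard2 : ∀ a b : ℕ, Multiset.card (a ::ₘ b ::ₘ msR) - 1 = L - 2 := by
    intro a b
    rw [Multiset.card_cons, Multiset.card_cons, hcardR]
    omega
  have hUB_AC : UBC ACp (L-2) 1 := by
    have h := UBC_prodS (s ::ₘ (s+2) ::ₘ msR)
    rwa [hcard2] at h
  have hUB_BD : UBC ((X:PowerSeries ℤ)^2 * BDp) (L-2) 1 := by
    apply UBC_X_pow_mul
    have h := UBC_prodS ((s+1) ::ₘ (s+2+1) ::ₘ msR)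
    rwa [hcard2] at h
  have hUB_pos : UBC (geom k₂ * (geom r * (ACp + X^2 * BDp))) (L-2) (k₂ * (r * (1+1))) := by
    apply UBC_geom_mul
    apply UBC_geom_mul
    exact UBC_add hUB_AC hUB_BD
  have hNN_neg : NN (geom k₂ * (geom r * ((X * ADp) + (X * BCp)))) := by
    apply NN_mul (NN_geom _)
    apply NN_mul (NN_geom _)
    exact NN_add (NN_mul NN_X (NN_prodS _)) (NN_mul NN_X (NN_prodS _))
  have hT2ub : ∀ nn : ℕ, coeff nn (geom k₂ * (geom r * W2p))
      ≤ ((k₂ * (r * (1+1)) : ℕ):ℤ) * ((nn:ℤ)+1)^(L-2) := by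
    intro nn
    have hsplit : geom k₂ * (geom r * W2p)
        = geom k₂ * (geom r * (ACp + X^2 * BDp))
          - geom k₂ * (geom r * ((X * ADp) + (X * BCp))) := by
      rw [hW2split]; ring
    rw [hsplit, map_sub]
    have h1 := hUB_pos nn
    have h2 := hNN_neg nn
    linarith
  -- the main estimate
  set c4 := r + k₂ + k - 1 with hc4
  set E := C + B * (2 * k₂ * r) + 1 with hE
  refine ⟨2*c4 + 4*c + 3 + 4^(L-1)*E + (r + k₂ + k), ?_⟩
  intro n hn
  set m := n - (r + k₂) with hm
  have hnm : r + k₂ + k ≤ n := by omega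
  have hmk : k ≤ m := by omega
  set m' := m - (k-1) with hm'
  -- T1 computation
  have hT1eq : coeff n ((X:PowerSeries ℤ)^(r+k₂) * (geom k * QS))
      = ∑ j ∈ range k, coeff (m - j) QS := by
    rw [coeff_X_pow_mul', if_pos (by omega : r + k₂ ≤ n), ← hm]
    rw [geom, Finset.sum_mul, map_sum]
    apply Finset.sum_congr rfl
    intro j hj
    rw [mem_range] at hj
    rw [coeff_X_pow_mul', if_pos (by omega : j ≤ m)]
  have hT1low : (k:ℤ) * (((m'/2 - c) ^ (L-1) : ℕ) : ℤ)
      - (k:ℤ) * ((C:ℤ) * ((n:ℤ)+1)^(L-2))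
      ≤ (B:ℤ) * coeff n ((X:PowerSeries ℤ)^(r+k₂) * (geom k * QS)) := by
    rw [hT1eq]
    have hper : ∀ j ∈ range k,
        (((m'/2 - c) ^ (L-1) : ℕ) : ℤ) - (C:ℤ) * ((n:ℤ)+1)^(L-2)
          ≤ (B:ℤ) * coeff (m - j) QS := by
      intro j hj
      rw [mem_range] at hj
      have h := hQS' (m - j)
      have hmono1 : ((m'/2 - c) ^ (L-1) : ℕ) ≤ (((m-j)/2 - c) ^ (L-1) : ℕ) := by
        apply Nat.pow_le_pow_left
        omega
      have hmono1' : (((m'/2 - c) ^ (L-1) : ℕ) : ℤ) ≤ ((((m-j)/2 - c) ^ (L-1) : ℕ) : ℤ) := by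
        exact_mod_cast hmono1
      have h6 : ((m - j:ℕ):ℤ) ≤ (n:ℤ) := by
        have : (m - j:ℕ) ≤ n := by omega
        exact_mod_cast this
      have hmono2 : (C:ℤ) * (((m-j : ℕ):ℤ)+1)^(L-2) ≤ (C:ℤ) * ((n:ℤ)+1)^(L-2) := by
        apply mul_le_mul_of_nonneg_left _ (by positivity)
        apply pow_le_pow_left₀ (by positivity)
        linarith
      linarith
    calc (k:ℤ) * (((m'/2 - c) ^ (L-1) : ℕ) : ℤ) - (k:ℤ) * ((C:ℤ) * ((n:ℤ)+1)^(L-2))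
        = ∑ _j ∈ range k,
            ((((m'/2 - c) ^ (L-1) : ℕ) : ℤ) - (C:ℤ) * ((n:ℤ)+1)^(L-2)) := by
          rw [Finset.sum_const, Finset.card_range, nsmul_eq_mul]; ring
      _ ≤ ∑ j ∈ range k, (B:ℤ) * coeff (m - j) QS := Finset.sum_le_sum hper
      _ = (B:ℤ) * ∑ j ∈ range k, coeff (m - j) QS := by rw [Finset.mul_sum]
  -- T2 bound at n
  have hT2 : coeff n (geom k₂ * (geom r * W2p))
      ≤ ((k₂ * (r * (1+1)) : ℕ):ℤ) * ((n:ℤ)+1)^(L-2) := hT2ub n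
  -- key size comparison (in ℕ)
  have hE1 : 1 ≤ E := by rw [hE]; omega
  have hsize : E * ((n+1)^(L-2)) + 1 ≤ (m'/2 - c) ^ (L-1) := by
    set A := m'/2 - c with hA
    set Q := (n+1)^(L-2) with hQdef
    set F := (4:ℕ)^(L-1) with hF
    have hm'v : m' = n - c4 := by rw [hm', hm, hc4]; omega
    have hnbig : 2*c4 + 4*c + 3 ≤ n := by omega
    have h1 : n + 1 ≤ 4 * A := by
      rw [hA, hm'v]
      omega
    have h2 : (n+1)^(L-1) ≤ (4*A)^(L-1) := Nat.pow_le_pow_left h1 _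
    have h3 : (4*A)^(L-1) = F * A^(L-1) := by rw [hF, mul_pow]
    have h4 : (n+1)^(L-1) = (n+1) * Q := by
      rw [hQdef]
      have e : L-1 = (L-2)+1 := by omega
      rw [e, pow_succ]; ring
    have h5 : F * E + 1 ≤ n + 1 := by omega
    have hQF : F ≤ Q := by
      have hq1 : n+1 ≤ Q := by
        rw [hQdef]
        calc n+1 = (n+1)^1 := (pow_one _).symm
          _ ≤ (n+1)^(L-2) := Nat.pow_le_pow_right (by omega) (by omega)
      have hFE : F ≤ F * E := Nat.le_mul_of_pos_right F (by omega)
      omega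
    have hchain : F * (E*Q + 1) ≤ F * (A^(L-1)) := by
      calc F * (E*Q+1) = (F*E)*Q + F := by ring
        _ ≤ (F*E)*Q + Q := by omega
        _ = (F*E + 1) * Q := by ring
        _ ≤ (n+1) * Q := Nat.mul_le_mul_right _ h5
        _ = (n+1)^(L-1) := h4.symm
        _ ≤ (4*A)^(L-1) := h2
        _ = F * A^(L-1) := h3
    exact Nat.le_of_mul_le_mul_left hchain (by positivity)
  -- final combination
  have hcoeffH : coeff n H
      = coeff n ((X:PowerSeries ℤ)^(r+k₂) * (geom k * QS))
        - coeff n (geom k₂ * (geom r * W2p)) := by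
    rw [hH2, map_sub]
  by_contra hcon
  push_neg at hcon
  have hBpos : (0:ℤ) < (B:ℤ) := by exact_mod_cast hB
  have h1 : (B:ℤ) * coeff n H ≤ 0 := mul_nonpos_of_nonneg_of_nonpos (le_of_lt hBpos) hcon
  rw [hcoeffH, mul_sub] at h1
  have hT2' : (B:ℤ) * coeff n (geom k₂ * (geom r * W2p))
      ≤ (B:ℤ) * (((k₂ * (r * (1+1)) : ℕ):ℤ) * ((n:ℤ)+1)^(L-2)) :=
    mul_le_mul_of_nonneg_left hT2 (le_of_lt hBpos)
  have hsizeZ : ((E:ℕ):ℤ) * ((n:ℤ)+1)^(L-2) + 1 ≤ ((((m'/2 - c) ^ (L-1) : ℕ)) : ℤ) := by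
    have hc := hsize
    have : ((E * ((n+1)^(L-2)) + 1 : ℕ) : ℤ) ≤ ((((m'/2 - c) ^ (L-1) : ℕ)) : ℤ) := by
      exact_mod_cast hc
    push_cast at this ⊢
    linarith
  have hkZ : (1:ℤ) ≤ (k:ℤ) := by exact_mod_cast hkpos
  have hnQ : (0:ℤ) ≤ ((n:ℤ)+1)^(L-2) := by positivity
  have hEZ : ((E:ℕ):ℤ) = (C:ℤ) + (B:ℤ) * (2 * (k₂:ℤ) * (r:ℤ)) + 1 := by
    rw [hE]; push_cast; ring
  -- multiply hsizeZ by k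
  have hkX5 : (k:ℤ) * (((E:ℕ):ℤ) * ((n:ℤ)+1)^(L-2) + 1)
      ≤ (k:ℤ) * ((((m'/2 - c) ^ (L-1) : ℕ)) : ℤ) :=
    mul_le_mul_of_nonneg_left hsizeZ (by positivity)
  have hcast2 : ((k₂ * (r * (1+1)) : ℕ):ℤ) = 2 * (k₂:ℤ) * (r:ℤ) := by push_cast; ring
  rw [hcast2] at hT2'
  rw [hEZ] at hkX5
  nlinarith [hT1low, hT2', hkX5, hkZ, hnQ,
    mul_nonneg (mul_nonneg (by positivity : (0:ℤ) ≤ (B:ℤ)) (by positivity : (0:ℤ) ≤ 2*(k₂:ℤ)*(r:ℤ))) hnQ,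
    mul_nonneg (sub_nonneg.mpr hkZ) (mul_nonneg (mul_nonneg (by positivity : (0:ℤ) ≤ (B:ℤ)) (by positivity : (0:ℤ) ≤ 2*(k₂:ℤ)*(r:ℤ))) hnQ)]
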